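/- Let n ≥ 2 be an integer and 0 < ε < 1/12. Let f be a function defined on a subset of ℝⁿ containing {0, e₁, e₂} with f(0) = 0, satisfying |‖f(x) − f(y)‖ − ‖x − y‖| ≤ ε for all x, y ∈ {0, e₁, e₂}, and suppose f(e₁) = (e′₁₁, 0, …, 0) and f(e₂) = (e′₂₁, e′₂₂, 0, …, 0) with e′₁₁ ≥ 0 and e′₂₂ ≥ 0. Then 1 − 2·ε ≤ e′₂₂ ≤ 1 + ε. -/
import Mathlib

lemma two_coord_norm_sq {n : ℕ} (i0 i1 : Fin n) (h : i0 ≠ i1)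
    (w : EuclideanSpace ℝ (Fin n)) (hw : ∀ j, j ≠ i0 → j ≠ i1 → w j = 0) :
    ‖w‖ ^ 2 = w i0 ^ 2 + w i1 ^ 2 := by
  rw [EuclideanSpace.norm_eq, Real.sq_sqrt (by positivity)]
  rw [← Finset.sum_subset (Finset.subset_univ ({i0, i1} : Finset (Fin n)))]
  · rw [Finset.sum_pair h]
    simp [Real.norm_eq_abs, sq_abs]
  · intro x _ hx
    simp only [Finset.mem_insert, Finset.mem_singleton, not_or] at hx
    rw [hw x hx.1 hx.2]
    simp

lemma arith_bound (ε a b c s : ℝ) (hε0 : 0 < ε) (hε : ε < 1 / 12)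
    (hs2 : s ^ 2 = 2) (hs1 : 1 ≤ s) (hs3 : s ≤ 3 / 2)
    (ha1 : 1 - ε ≤ a) (ha2 : a ≤ 1 + ε) (hc : 0 ≤ c)
    (hB1 : (1 - ε) ^ 2 ≤ b ^ 2 + c ^ 2) (hB2 : b ^ 2 + c ^ 2 ≤ (1 + ε) ^ 2)
    (hC1 : (s - ε) ^ 2 ≤ (a - b) ^ 2 + c ^ 2)
    (hC2 : (a - b) ^ 2 + c ^ 2 ≤ (s + ε) ^ 2) :
    1 - 2 * ε ≤ c ∧ c ≤ 1 + ε := by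
  have ha0 : (0:ℝ) < a := by linarith
  have ha2sq : a ^ 2 ≤ (1 + ε) ^ 2 := pow_le_pow_left₀ ha0.le ha2 2
  have ha1sq : (1 - ε) ^ 2 ≤ a ^ 2 :=
    pow_le_pow_left₀ (by linarith) ha1 2
  have haa : (11 / 12 : ℝ) ^ 2 ≤ a ^ 2 :=
    pow_le_pow_left₀ (by norm_num) (by linarith) 2
  have hupper : c ≤ 1 + ε :=
    (pow_le_pow_iff_left₀ hc (by linarith) two_ne_zero).mp
      (by linarith [sq_nonneg b])
  have hεsq : ε ^ 2 ≤ ε / 12 := by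
    have h := mul_le_mul_of_nonneg_left hε.le hε0.le
    linarith [h]
  have hsε : s * ε ≤ (3 / 2) * ε := mul_le_mul_of_nonneg_right hs3 hε0.le
  have hab1 : 2 * (a * b) ≤ (2 * s + 4) * ε + ε ^ 2 := by
    have e1 : (s - ε) ^ 2 = s ^ 2 - 2 * (s * ε) + ε ^ 2 := by ring
    have e2 : (a - b) ^ 2 = a ^ 2 - 2 * (a * b) + b ^ 2 := by ring
    rw [e1, e2, hs2] at hC1
    have e3 : (2 * s + 4) * ε = 2 * (s * ε) + 4 * ε := by ring
    rw [e3]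
    linarith [hC1, hB2, ha2sq]
  have hab2 : -((2 * s + 4) * ε + ε ^ 2) ≤ 2 * (a * b) := by
    have e1 : (s + ε) ^ 2 = s ^ 2 + 2 * (s * ε) + ε ^ 2 := by ring
    have e2 : (a - b) ^ 2 = a ^ 2 - 2 * (a * b) + b ^ 2 := by ring
    rw [e1, e2, hs2] at hC2
    have e3 : (2 * s + 4) * ε = 2 * (s * ε) + 4 * ε := by ring
    rw [e3]
    linarith [hC2, hB1, ha1sq, sq_nonneg ε]
  have hM : (2 * s + 4) * ε + ε ^ 2 ≤ (85 / 12) * ε := by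
    have e3 : (2 * s + 4) * ε = 2 * (s * ε) + 4 * ε := by ring
    rw [e3]; linarith [hsε, hεsq]
  have h4ab : (2 * (a * b)) ^ 2 ≤ ((85 / 12) * ε) ^ 2 :=
    sq_le_sq' (by linarith) (by linarith)
  have hb2 : b ^ 2 ≤ 2 * ε - 3 * ε ^ 2 := by
    have h4' : 4 * (a ^ 2 * b ^ 2) ≤ (85 / 12) ^ 2 * ε ^ 2 := by
      linarith [h4ab, sq_abs (a*b)]
    have hbb : (11 / 12 : ℝ) ^ 2 * b ^ 2 ≤ a ^ 2 * b ^ 2 :=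
      mul_le_mul_of_nonneg_right haa (sq_nonneg b)
    have hε2 : (85 / 12 : ℝ) ^ 2 * ε ^ 2 ≤ (85 / 12) ^ 2 * (ε / 12) := by
      linarith [hεsq]
    linarith [h4', hbb, hε2, hεsq]
  have hc2 : (1 - 2 * ε) ^ 2 ≤ c ^ 2 := by linarith [hB1, hb2]
  refine ⟨(pow_le_pow_iff_left₀ (by linarith) hc two_ne_zero).mp hc2, hupper⟩

/-- If `f 0 = 0`, `f` is an `ε`-isometry on `{0, e₁, e₂}` (`0 < ε < 1/12`) with
`f e₁ = (e′₁₁, 0, …, 0)`, `f e₂ = (e′₂₁, e′₂₂, 0, …, 0)`, `e′₁₁, e′₂₂ ≥ 0`, then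
`1 − 2ε ≤ e′₂₂ ≤ 1 + ε`. -/
theorem second_diagonal_bound (n : ℕ) (hn : 2 ≤ n) (ε : ℝ)
    (hε0 : 0 < ε) (hε : ε < 1 / 12)
    (f : EuclideanSpace ℝ (Fin n) → EuclideanSpace ℝ (Fin n))
    (hf0 : f 0 = 0)
    (hiso : ∀ x ∈ ({0, EuclideanSpace.single ⟨0, by omega⟩ (1 : ℝ),
              EuclideanSpace.single ⟨1, by omega⟩ (1 : ℝ)} :
              Set (EuclideanSpace ℝ (Fin n))),
            ∀ y ∈ ({0, EuclideanSpace.single ⟨0, by omega⟩ (1 : ℝ),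
              EuclideanSpace.single ⟨1, by omega⟩ (1 : ℝ)} :
              Set (EuclideanSpace ℝ (Fin n))),
            |‖f x - f y‖ - ‖x - y‖| ≤ ε)
    (htri1 : ∀ j : Fin n, j ≠ ⟨0, by omega⟩ →
      f (EuclideanSpace.single ⟨0, by omega⟩ (1 : ℝ)) j = 0)
    (htri2 : ∀ j : Fin n, j ≠ ⟨0, by omega⟩ → j ≠ ⟨1, by omega⟩ →
      f (EuclideanSpace.single ⟨1, by omega⟩ (1 : ℝ)) j = 0)
    (hpos1 : 0 ≤ f (EuclideanSpace.single ⟨0, by omega⟩ (1 : ℝ)) ⟨0, by omega⟩)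
    (hpos2 : 0 ≤ f (EuclideanSpace.single ⟨1, by omega⟩ (1 : ℝ)) ⟨1, by omega⟩) :
    1 - 2 * ε ≤ f (EuclideanSpace.single ⟨1, by omega⟩ (1 : ℝ)) ⟨1, by omega⟩ ∧
    f (EuclideanSpace.single ⟨1, by omega⟩ (1 : ℝ)) ⟨1, by omega⟩ ≤ 1 + ε := by
  set i0 : Fin n := ⟨0, by omega⟩ with hi0
  set i1 : Fin n := ⟨1, by omega⟩ with hi1
  have hne : i0 ≠ i1 := by simp [hi0, hi1, Fin.ext_iff]
  set u : EuclideanSpace ℝ (Fin n) := EuclideanSpace.single i0 (1 : ℝ) with hu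
  set v : EuclideanSpace ℝ (Fin n) := EuclideanSpace.single i1 (1 : ℝ) with hv
  set a : ℝ := f u i0 with ha
  set b : ℝ := f v i0 with hb
  set c : ℝ := f v i1 with hc
  have hmem0 : (0 : EuclideanSpace ℝ (Fin n)) ∈
      ({0, u, v} : Set (EuclideanSpace ℝ (Fin n))) := by left; rfl
  have hmemu : u ∈ ({0, u, v} : Set (EuclideanSpace ℝ (Fin n))) := by
    right; left; rfl
  have hmemv : v ∈ ({0, u, v} : Set (EuclideanSpace ℝ (Fin n))) := by
    right; right; rfl
  have hfu_sq : ‖f u‖ ^ 2 = a ^ 2 := by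
    have h := two_coord_norm_sq i0 i1 hne (f u) (fun j hj0 _ => htri1 j hj0)
    rw [h, htri1 i1 hne.symm]
    ring
  have hfv_sq : ‖f v‖ ^ 2 = b ^ 2 + c ^ 2 :=
    two_coord_norm_sq i0 i1 hne (f v) (fun j hj0 hj1 => htri2 j hj0 hj1)
  have hfuv_sq : ‖f u - f v‖ ^ 2 = (a - b) ^ 2 + c ^ 2 := by
    have h := two_coord_norm_sq i0 i1 hne (f u - f v)
      (fun j hj0 hj1 => by
        simp only [PiLp.sub_apply, htri1 j hj0, htri2 j hj0 hj1, sub_zero])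
    simp only [PiLp.sub_apply] at h
    rw [h, htri1 i1 hne.symm]
    ring
  have hnu : ‖u‖ = 1 := by simp [hu, EuclideanSpace.norm_single]
  have hnv : ‖v‖ = 1 := by simp [hv, EuclideanSpace.norm_single]
  have huv_sq : ‖u - v‖ ^ 2 = 2 := by
    have h := two_coord_norm_sq i0 i1 hne (u - v)
      (fun j hj0 hj1 => by
        simp [hu, hv, EuclideanSpace.single_apply, hj0, hj1])
    rw [h]
    simp only [PiLp.sub_apply, hu, hv, EuclideanSpace.single_apply]
    simp [hne, hne.symm]
    norm_num
  have h1 : |‖f u‖ - 1| ≤ ε := by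
    have h := hiso u hmemu 0 hmem0
    simpa [hf0, hnu] using h
  have h2 : |‖f v‖ - 1| ≤ ε := by
    have h := hiso v hmemv 0 hmem0
    simpa [hf0, hnv] using h
  have h3 : |‖f u - f v‖ - Real.sqrt 2| ≤ ε := by
    have h := hiso u hmemu v hmemv
    have huv : ‖u - v‖ = Real.sqrt 2 := by
      rw [← Real.sqrt_sq (norm_nonneg (u - v)), huv_sq]
    rwa [huv] at h
  rw [abs_le] at h1 h2 h3
  set s : ℝ := Real.sqrt 2 with hs
  have hs2 : s ^ 2 = 2 := Real.sq_sqrt (by norm_num)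
  have hsnn : 0 ≤ s := Real.sqrt_nonneg 2
  have hs1 : 1 ≤ s := by nlinarith
  have hs3 : s ≤ 3 / 2 := by nlinarith
  have ha_eq : ‖f u‖ = a := by
    rw [← Real.sqrt_sq hpos1, ← hfu_sq, Real.sqrt_sq (norm_nonneg _)]
  rw [ha_eq] at h1
  have ha1 : 1 - ε ≤ a := by linarith [h1.1]
  have ha2 : a ≤ 1 + ε := by linarith [h1.2]
  have hB1 : (1 - ε) ^ 2 ≤ b ^ 2 + c ^ 2 := by
    rw [← hfv_sq]
    exact pow_le_pow_left₀ (by linarith [h2.1, norm_nonneg (f v)]; )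
      (by linarith [h2.1]) 2
  have hB2 : b ^ 2 + c ^ 2 ≤ (1 + ε) ^ 2 := by
    rw [← hfv_sq]
    exact pow_le_pow_left₀ (norm_nonneg _) (by linarith [h2.2]) 2
  have hC1 : (s - ε) ^ 2 ≤ (a - b) ^ 2 + c ^ 2 := by
    rw [← hfuv_sq]
    exact pow_le_pow_left₀ (by linarith [h3.1]) (by linarith [h3.1]) 2
  have hC2 : (a - b) ^ 2 + c ^ 2 ≤ (s + ε) ^ 2 := by
    rw [← hfuv_sq]
    exact pow_le_pow_left₀ (norm_nonneg _) (by linarith [h3.2]) 2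
  exact arith_bound ε a b c s hε0 hε hs2 hs1 hs3 ha1 ha2 hpos2 hB1 hB2 hC1 hC2
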